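/- When s = d, strict rectangle search searches exactly the same region as monobead: suppose monobead with beam width s generates its first solution when expanding a node x at slot s of depth d, that no other solutions exist, that strict rectangle search never runs out of nodes to fill its beam, and that tie-breaking is identical. If s = d, then strict rectangle search expands exactly the same set of nodes as monobead with beam width s up to the expansion of x, and in particular the numbers of nodes expanded by the two algorithms are equal (the overhead is 0). -/

import Mathlib

/-!
Formalization of monobead (fixed-width monotonic beam search) and strict
rectangle search (Lemons, Ruml et al., "Rectangle Search: An Anytime Beam
Search").

Monobead with beam width `b`: the beam at each depth is an ordered sequence
of `b` numbered slots.  Given the beam at depth `j`, the beam at depth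
`j+1` is filled in slot order: for `i = 1,…,b`, the node in slot `i` at
depth `j` is expanded, its children are inserted into a priority queue
(ordered by the node-evaluation function `eval`) shared by depth `j+1`, and
the best node of that queue is removed and placed in slot `i` at depth
`j+1`; children not selected remain in the queue for later slots.
`mbBeam P eval b j` is the beam at depth `j` (depth 0 = the start node) and
`mbLog P eval b j` is the list of nodes monobead expands, in expansion
order, through depth `j`.

Strict rectangle search (aspect 1): per depth level it keeps the ordered
list `sel` of slot nodes selected so far, the count `expCnt` of those
already expanded, and the residual priority queue `queue`.  In iteration
`t` it expands one new node (the next slot) at each previously explored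
depth level `1,…,t−1` (shallowest first), and then fills an entire new
depth level: the `t` nodes of depth level `t` are expanded one at a time in
increasing slot order, and immediately after each such expansion the node
for the corresponding slot at depth `t+1` is selected from depth `t+1`'s
queue.  `log` records the expansion order and `starved` is set if a
selection is ever attempted on an empty queue (i.e. the search runs out of
nodes to fill its beam).  Since the assumption throughout is that no
incumbent solution has been found, no pruning occurs and none is modeled;
both algorithms use the same deterministic queue insertion, so tie-breaking
is identical.
-/

namespace RectangleSearchFormal

structure SearchProblem (V : Type) where
  start : V
  isGoal : V → Bool
  succ : V → Finset V
  cost : V → V → ℚ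

variable {V : Type}

def IsPath (P : SearchProblem V) : List V → Prop
  | [] => False
  | [_] => True
  | u :: v :: rest => v ∈ P.succ u ∧ IsPath P (v :: rest)

def pathCost (P : SearchProblem V) : List V → ℚ
  | [] => 0
  | [_] => 0
  | u :: v :: rest => P.cost u v + pathCost P (v :: rest)

def IsPathFromTo (P : SearchProblem V) (p : List V) (u w : V) : Prop :=
  IsPath P p ∧ p.head? = some u ∧ p.getLast? = some w

def IsSolutionPath (P : SearchProblem V) (p : List V) : Prop :=
  ∃ w, IsPathFromTo P p P.start w ∧ P.isGoal w = true

/-- A search node: a state, its g-value, and the path from the start. -/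
structure MNode (V : Type) where
  state : V
  g : ℚ
  path : List V
deriving DecidableEq

/-- The children generated when a node is expanded. -/
noncomputable def children (P : SearchProblem V) (n : MNode V) : List (MNode V) :=
  (P.succ n.state).toList.map fun c => ⟨c, n.g + P.cost n.state c, n.path ++ [c]⟩

/-- Insertion into a priority queue ordered by the node-evaluation function. -/
def insertQ (eval : V → ℚ) (n : MNode V) : List (MNode V) → List (MNode V)
  | [] => [n]
  | m :: rest =>
    if eval n.state ≤ eval m.state then n :: m :: rest else m :: insertQ eval n rest

def insertAll (eval : V → ℚ) (ns : List (MNode V)) (q : List (MNode V)) :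
    List (MNode V) :=
  ns.foldl (fun q' n => insertQ eval n q') q

/-- Fill `b` slots of the next beam in slot order: expand the parent in the
corresponding slot (if any), insert its children into the shared queue, and
pop the best node of the queue into the slot. -/
noncomputable def fillSlots (P : SearchProblem V) (eval : V → ℚ) :
    ℕ → List (MNode V) → List (MNode V) → List (MNode V)
  | 0, _, _ => []
  | b + 1, parents, queue =>
    let q1 := match parents with
      | [] => queue
      | p :: _ => insertAll eval (children P p) queue
    match q1 with
    | [] => []   -- monobead has run out of nodes to fill its beam
    | best :: rest => best :: fillSlots P eval b parents.tail rest

/-- The beam of monobead with width `b` at depth `j` (depth 0 is the start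
node); slot `i` is entry `i - 1`. -/
noncomputable def mbBeam (P : SearchProblem V) (eval : V → ℚ) (b : ℕ) :
    ℕ → List (MNode V)
  | 0 => [⟨P.start, 0, [P.start]⟩]
  | j + 1 => fillSlots P eval b (mbBeam P eval b j) []

/-- The nodes monobead expands, in expansion order, through depth `j`
(slot `i` of depth `j'` is expanded while slot `i` of depth `j' + 1` is
being filled). -/
noncomputable def mbLog (P : SearchProblem V) (eval : V → ℚ) (b : ℕ) :
    ℕ → List (MNode V)
  | 0 => mbBeam P eval b 0
  | j + 1 => mbLog P eval b j ++ mbBeam P eval b (j + 1)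

/-- The state of strict rectangle search. -/
structure SRState (V : Type) where
  sel : ℕ → List (MNode V)
  expCnt : ℕ → ℕ
  queue : ℕ → List (MNode V)
  log : List (MNode V)
  iter : ℕ
  starved : Bool

/-- Expand the next slot node at depth level `ℓ`: if a selected-but-not-yet-
expanded slot node exists it is expanded, otherwise the best node of the
level-`ℓ` queue is selected into the next slot and expanded; its children
are inserted into the queue of level `ℓ + 1`. -/
noncomputable def srExpandNext (P : SearchProblem V) (eval : V → ℚ) (ℓ : ℕ)
    (σ : SRState V) : SRState V :=
  let go : MNode V → SRState V → SRState V := fun n σ' =>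
    { σ' with
      expCnt := fun m => if m = ℓ then σ'.expCnt m + 1 else σ'.expCnt m,
      queue := fun m =>
        if m = ℓ + 1 then insertAll eval (children P n) (σ'.queue m) else σ'.queue m,
      log := σ'.log ++ [n] }
  match (σ.sel ℓ).drop (σ.expCnt ℓ) with
  | n :: _ => go n σ
  | [] =>
    match σ.queue ℓ with
    | [] => { σ with starved := true }
    | n :: q' =>
      go n { σ with sel := fun m => if m = ℓ then σ.sel m ++ [n] else σ.sel m,
                    queue := fun m => if m = ℓ then q' else σ.queue m }

/-- Select (but do not yet expand) the best node of the level-`ℓ` queue for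
the next slot at depth level `ℓ`. -/
def srSelect (ℓ : ℕ) (σ : SRState V) : SRState V :=
  match σ.queue ℓ with
  | [] => { σ with starved := true }
  | n :: q' =>
    { σ with sel := fun m => if m = ℓ then σ.sel m ++ [n] else σ.sel m,
             queue := fun m => if m = ℓ then q' else σ.queue m }

/-- One iteration of strict rectangle search (iteration number `iter + 1`):
one new slot is expanded at each previously explored depth level, then the
new deepest depth level is expanded slot by slot, the corresponding slot of
the next depth level being selected immediately after each expansion. -/
noncomputable def srIter (P : SearchProblem V) (eval : V → ℚ)
    (σ : SRState V) : SRState V :=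
  let t := σ.iter + 1
  let σ1 := (List.range (t - 1)).foldl (fun σ' i => srExpandNext P eval (i + 1) σ') σ
  let σ2 := (List.range t).foldl
      (fun σ' _ => srSelect (t + 1) (srExpandNext P eval t σ')) σ1
  { σ2 with iter := t }

/-- The initial state of strict rectangle search: the start node (depth
level 0) has been expanded, its children populating the depth-1 queue. -/
noncomputable def srInit (P : SearchProblem V) (eval : V → ℚ) : SRState V :=
  srExpandNext P eval 0
    { sel := fun m => if m = 0 then [⟨P.start, 0, [P.start]⟩] else [],
      expCnt := fun _ => 0, queue := fun _ => [],
      log := [], iter := 0, starved := false }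

/-- The state of strict rectangle search after `k` iterations. -/
noncomputable def srRun (P : SearchProblem V) (eval : V → ℚ) (k : ℕ) : SRState V :=
  (srIter P eval)^[k] (srInit P eval)

/-- The number of nodes expanded up to and including the expansion of `x`,
given the expansion log `l`. -/
def countUpTo [DecidableEq V] (l : List (MNode V)) (x : MNode V) : ℕ :=
  (l.takeWhile (fun n => n != x)).length + 1

/-- The overhead of strict rectangle search over monobead (with beam width
`s`, whose first solution is generated when expanding node `x` in slot `s`
at depth `d`): the number of nodes strict rectangle search expands up to
its expansion of `x` minus the number monobead expands up to its expansion
of `x`. -/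
noncomputable def overhead [DecidableEq V] (P : SearchProblem V) (eval : V → ℚ)
    (s d : ℕ) (x : MNode V) : ℤ :=
  (countUpTo (srRun P eval (max s d)).log x : ℤ) -
    (countUpTo (mbLog P eval s d) x : ℤ)


/-! ### Auxiliary development -/

/-- The start node. -/
def startN (P : SearchProblem V) : MNode V := ⟨P.start, 0, [P.start]⟩

lemma fillSlots_succ (P : SearchProblem V) (eval : V → ℚ) (k : ℕ)
    (ps q : List (MNode V)) :
    fillSlots P eval (k+1) ps q =
      match (match ps with | [] => q | p :: _ => insertAll eval (children P p) q) with
      | [] => []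
      | best :: rest => best :: fillSlots P eval k ps.tail rest := rfl

/-- Selected slots and residual queue after `k` slot-steps of filling a
level whose parents are `ps`, starting from queue `q`. -/
noncomputable def msq (P : SearchProblem V) (eval : V → ℚ) :
    ℕ → List (MNode V) → List (MNode V) → List (MNode V) × List (MNode V)
  | 0, _, q => ([], q)
  | i + 1, [], queue =>
    match queue with
    | [] => ([], [])
    | best :: rest =>
      let r := msq P eval i [] rest
      (best :: r.1, r.2)
  | i + 1, p :: pt, queue =>
    match insertAll eval (children P p) queue with
    | [] => ([], [])
    | best :: rest =>
      let r := msq P eval i pt rest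
      (best :: r.1, r.2)

lemma msq_succ' (P : SearchProblem V) (eval : V → ℚ) (k : ℕ)
    (ps q : List (MNode V)) :
    msq P eval (k+1) ps q =
      match (match ps with | [] => q | p :: _ => insertAll eval (children P p) q) with
      | [] => ([], [])
      | best :: rest =>
        (best :: (msq P eval k ps.tail rest).1, (msq P eval k ps.tail rest).2) := by
  cases ps with
  | nil => rfl
  | cons p pt => rfl

lemma msq_fst (P : SearchProblem V) (eval : V → ℚ) :
    ∀ (k : ℕ) (ps q : List (MNode V)),
      (msq P eval k ps q).1 = fillSlots P eval k ps q := by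
  intro k
  induction k with
  | zero => intro ps q; rfl
  | succ k ih =>
    intro ps q
    rw [fillSlots_succ, msq_succ']
    cases h : (match ps with | [] => q | p :: _ => insertAll eval (children P p) q) with
    | nil => rfl
    | cons b rest => simp [ih]

lemma msq_len_le (P : SearchProblem V) (eval : V → ℚ) :
    ∀ (k : ℕ) (ps q : List (MNode V)), (msq P eval k ps q).1.length ≤ k := by
  intro k
  induction k with
  | zero => intro ps q; simp [msq]
  | succ k ih =>
    intro ps q
    rw [msq_succ']
    cases h : (match ps with | [] => q | p :: _ => insertAll eval (children P p) q) with
    | nil => simp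
    | cons b rest => simpa using ih ps.tail rest

lemma msq_prefix (P : SearchProblem V) (eval : V → ℚ) :
    ∀ (k : ℕ) (ps q : List (MNode V)),
      (msq P eval k ps q).1 <+: (msq P eval (k+1) ps q).1 := by
  intro k
  induction k with
  | zero => intro ps q; simp [msq]
  | succ k ih =>
    intro ps q
    rw [msq_succ', msq_succ']
    cases h : (match ps with | [] => q | p :: _ => insertAll eval (children P p) q) with
    | nil => simp
    | cons b rest => simpa using ih ps.tail rest

lemma msq_prefix_le (P : SearchProblem V) (eval : V → ℚ)
    (k m : ℕ) (hkm : k ≤ m) (ps q : List (MNode V)) :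
      (msq P eval k ps q).1 <+: (msq P eval m ps q).1 := by
  induction m with
  | zero => cases Nat.le_zero.mp hkm; exact List.prefix_refl _
  | succ m ih =>
    rcases Nat.lt_or_ge k (m+1) with h | h
    · exact (ih (Nat.lt_succ_iff.mp h)).trans (msq_prefix P eval m ps q)
    · cases le_antisymm hkm h; exact List.prefix_refl _

lemma msq_full_pred (P : SearchProblem V) (eval : V → ℚ) :
    ∀ (k : ℕ) (ps q : List (MNode V)),
      (msq P eval (k+1) ps q).1.length = k+1 → (msq P eval k ps q).1.length = k := by
  intro k
  induction k with
  | zero => intro ps q _; simp [msq]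
  | succ k ih =>
    intro ps q h
    rw [msq_succ'] at h ⊢
    cases hq : (match ps with | [] => q | p :: _ => insertAll eval (children P p) q) with
    | nil => rw [hq] at h; simp at h
    | cons b rest =>
      rw [hq] at h
      simp only [List.length_cons, Nat.succ_inj] at h ⊢
      exact ih ps.tail rest h

lemma msq_full_le (P : SearchProblem V) (eval : V → ℚ)
    (k m : ℕ) (hkm : k ≤ m) (ps q : List (MNode V))
    (h : (msq P eval m ps q).1.length = m) :
    (msq P eval k ps q).1.length = k := by
  induction m with
  | zero => cases Nat.le_zero.mp hkm; exact h
  | succ m ih =>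
    rcases Nat.lt_or_ge k (m+1) with h' | h'
    · exact ih (Nat.lt_succ_iff.mp h') (msq_full_pred P eval m ps q h)
    · cases le_antisymm hkm h'; exact h

/-- The key step lemma: one more `msq` step, taken at the end. -/
lemma msq_succ (P : SearchProblem V) (eval : V → ℚ) :
    ∀ (k : ℕ) (ps q : List (MNode V)),
      (msq P eval k ps q).1.length = k →
      msq P eval (k+1) ps q =
        match (match ps.drop k with
               | [] => (msq P eval k ps q).2
               | p :: _ => insertAll eval (children P p) (msq P eval k ps q).2) with
        | [] => ((msq P eval k ps q).1, [])
        | best :: rest => ((msq P eval k ps q).1 ++ [best], rest) := by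
  intro k
  induction k with
  | zero =>
    intro ps q _
    rw [msq_succ']
    simp only [msq]
    cases hq : (match ps with | [] => q | p :: _ => insertAll eval (children P p) q) with
    | nil => simp
    | cons b rest => simp
  | succ k ih =>
    intro ps q h
    have h1 : (msq P eval (k+1) ps q).1.length = k + 1 := h
    rw [msq_succ'] at h1
    cases hq : (match ps with | [] => q | p :: _ => insertAll eval (children P p) q) with
    | nil => rw [hq] at h1; simp at h1
    | cons b rest =>
      rw [hq] at h1
      simp only [List.length_cons, Nat.succ_inj] at h1
      have ihx := ih ps.tail rest h1
      rw [msq_succ' P eval (k+1) ps q, hq]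
      rw [msq_succ' P eval k ps q, hq] 
      simp only
      rw [ihx]
      have hdrop : ps.drop (k+1) = ps.tail.drop k := by
        cases ps <;> simp
      rw [hdrop]
      cases hq2 : (match ps.tail.drop k with
          | [] => (msq P eval k ps.tail rest).2
          | p :: _ => insertAll eval (children P p) (msq P eval k ps.tail rest).2) with
      | nil => simp [hq2]
      | cons b' rest' => simp [hq2]

lemma mbBeam_zero (P : SearchProblem V) (eval : V → ℚ) (b : ℕ) :
    mbBeam P eval b 0 = [startN P] := rfl

lemma mbBeam_succ (P : SearchProblem V) (eval : V → ℚ) (b j : ℕ) :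
    mbBeam P eval b (j+1) = fillSlots P eval b (mbBeam P eval b j) [] := rfl

/-- The parents of depth level `ℓ` (for the `msq` description of level `ℓ`'s
queue evolution; level 1's single parent is pre-inserted in `q0`). -/
noncomputable def par (P : SearchProblem V) (eval : V → ℚ) (s ℓ : ℕ) :
    List (MNode V) :=
  if ℓ ≤ 1 then [] else mbBeam P eval s (ℓ-1)

noncomputable def q0 (P : SearchProblem V) (eval : V → ℚ) (ℓ : ℕ) :
    List (MNode V) :=
  if ℓ ≤ 1 then insertAll eval (children P (startN P)) [] else []

/-- Slots of level `ℓ` selected after `k` pops. -/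
noncomputable def Sel (P : SearchProblem V) (eval : V → ℚ) (s ℓ k : ℕ) :
    List (MNode V) :=
  (msq P eval k (par P eval s ℓ) (q0 P eval ℓ)).1

/-- Residual queue of level `ℓ` after `k` insert/pop steps. -/
noncomputable def Que (P : SearchProblem V) (eval : V → ℚ) (s ℓ k : ℕ) :
    List (MNode V) :=
  (msq P eval k (par P eval s ℓ) (q0 P eval ℓ)).2

/-- Level-`ℓ` queue in mid-step: after the `(k+1)`-st parent insertion but
before the `(k+1)`-st pop. -/
noncomputable def QMid (P : SearchProblem V) (eval : V → ℚ) (s ℓ k : ℕ) :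
    List (MNode V) :=
  match (par P eval s ℓ).drop k with
  | [] => Que P eval s ℓ k
  | p :: _ => insertAll eval (children P p) (Que P eval s ℓ k)

lemma fillSlots_start (P : SearchProblem V) (eval : V → ℚ) (k : ℕ) :
    fillSlots P eval (k+1) [startN P] [] =
      fillSlots P eval (k+1) [] (insertAll eval (children P (startN P)) []) := by
  rw [fillSlots_succ, fillSlots_succ]
  rfl

/-- `Sel ℓ s` is exactly the beam of monobead at depth `ℓ`. -/
lemma Sel_s (P : SearchProblem V) (eval : V → ℚ) (s : ℕ) (hs : 1 ≤ s)
    (ℓ : ℕ) (hl : 1 ≤ ℓ) :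
    Sel P eval s ℓ s = mbBeam P eval s ℓ := by
  match ℓ, hl with
  | 1, _ =>
    rw [Sel, msq_fst, par, q0]
    simp only [le_refl, if_pos]
    obtain ⟨s', rfl⟩ : ∃ s', s = s' + 1 := ⟨s - 1, by omega⟩
    rw [← fillSlots_start, mbBeam_succ, mbBeam_zero]
  | (m+2), _ =>
    rw [Sel, msq_fst, par, q0]
    have : ¬ (m + 2 ≤ 1) := by omega
    rw [if_neg this, if_neg this]
    rw [mbBeam_succ]
    rfl

lemma Sel_len (P : SearchProblem V) (eval : V → ℚ) (s : ℕ) (hs : 1 ≤ s)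
    (hFull : ∀ j, 1 ≤ j → j ≤ s → (mbBeam P eval s j).length = s)
    (ℓ k : ℕ) (hl : 1 ≤ ℓ) (hls : ℓ ≤ s) (hk : k ≤ s) :
    (Sel P eval s ℓ k).length = k := by
  have h := Sel_s P eval s hs ℓ hl
  exact msq_full_le P eval k s hk _ _ (by rw [← Sel, h]; exact hFull ℓ hl hls)

lemma Sel_take (P : SearchProblem V) (eval : V → ℚ) (s : ℕ) (hs : 1 ≤ s)
    (hFull : ∀ j, 1 ≤ j → j ≤ s → (mbBeam P eval s j).length = s)
    (ℓ k : ℕ) (hl : 1 ≤ ℓ) (hls : ℓ ≤ s) (hk : k ≤ s) :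
    Sel P eval s ℓ k = (mbBeam P eval s ℓ).take k := by
  have hpre : Sel P eval s ℓ k <+: Sel P eval s ℓ s :=
    msq_prefix_le P eval k s hk _ _
  rw [Sel_s P eval s hs ℓ hl] at hpre
  have := List.prefix_iff_eq_take.mp hpre
  rwa [Sel_len P eval s hs hFull ℓ k hl hls hk] at this

/-- The basic step of level `ℓ`: pop the best node of the mid-step queue. -/
lemma SelQue_step (P : SearchProblem V) (eval : V → ℚ) (s : ℕ) (hs : 1 ≤ s)
    (hFull : ∀ j, 1 ≤ j → j ≤ s → (mbBeam P eval s j).length = s)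
    (ℓ k : ℕ) (hl : 1 ≤ ℓ) (hls : ℓ ≤ s) (hk : k + 1 ≤ s) :
    ∃ b rest, QMid P eval s ℓ k = b :: rest ∧
      Sel P eval s ℓ (k+1) = Sel P eval s ℓ k ++ [b] ∧
      Que P eval s ℓ (k+1) = rest := by
  have hlen : (Sel P eval s ℓ k).length = k :=
    Sel_len P eval s hs hFull ℓ k hl hls (by omega)
  have hlen1 : (Sel P eval s ℓ (k+1)).length = k+1 :=
    Sel_len P eval s hs hFull ℓ (k+1) hl hls hk
  have h : msq P eval (k+1) (par P eval s ℓ) (q0 P eval ℓ) =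
      match QMid P eval s ℓ k with
      | [] => (Sel P eval s ℓ k, [])
      | best :: rest => (Sel P eval s ℓ k ++ [best], rest) :=
    msq_succ P eval k (par P eval s ℓ) (q0 P eval ℓ) hlen
  cases hq : QMid P eval s ℓ k with
  | nil =>
    rw [hq] at h
    exfalso
    have h1 : Sel P eval s ℓ (k+1) = Sel P eval s ℓ k := by
      have := congrArg Prod.fst h; simpa [Sel] using this
    rw [h1, hlen] at hlen1; omega
  | cons b rest =>
    rw [hq] at h
    refine ⟨b, rest, rfl, ?_, ?_⟩
    · have := congrArg Prod.fst h; simpa [Sel] using this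
    · have := congrArg Prod.snd h; simpa [Que, Sel] using this

lemma level_step (P : SearchProblem V) (eval : V → ℚ) (s : ℕ) (hs : 1 ≤ s)
    (hFull : ∀ j, 1 ≤ j → j ≤ s → (mbBeam P eval s j).length = s)
    (ℓ k : ℕ) (hl : 1 ≤ ℓ) (hls : ℓ ≤ s) (hk : k + 1 ≤ s) :
    ∃ b, (mbBeam P eval s ℓ)[k]? = some b ∧
      QMid P eval s ℓ k = b :: Que P eval s ℓ (k+1) ∧
      Sel P eval s ℓ (k+1) = Sel P eval s ℓ k ++ [b] := by
  obtain ⟨b, rest, h1, h2, h3⟩ := SelQue_step P eval s hs hFull ℓ k hl hls hk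
  refine ⟨b, ?_, by rw [h1, h3], h2⟩
  have t1 := Sel_take P eval s hs hFull ℓ (k+1) hl hls hk
  have t0 := Sel_take P eval s hs hFull ℓ k hl hls (by omega)
  rw [t1, t0, List.take_succ] at h2
  have := List.append_cancel_left h2
  cases hg : (mbBeam P eval s ℓ)[k]? with
  | none => rw [hg] at this; simp at this
  | some c => rw [hg] at this; simp at this; rw [this]

lemma QMid_one (P : SearchProblem V) (eval : V → ℚ) (s k : ℕ) :
    QMid P eval s 1 k = Que P eval s 1 k := by
  rw [QMid, par]
  simp

lemma QMid_up (P : SearchProblem V) (eval : V → ℚ) (s ℓ k : ℕ) (hl : 1 ≤ ℓ)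
    (b : MNode V) (hb : (mbBeam P eval s ℓ)[k]? = some b) :
    QMid P eval s (ℓ+1) k = insertAll eval (children P b) (Que P eval s (ℓ+1) k) := by
  have hlen : k < (mbBeam P eval s ℓ).length := by
    by_contra h
    rw [List.getElem?_eq_none (by omega)] at hb
    cases hb
  have hdrop : (mbBeam P eval s ℓ).drop k = b :: (mbBeam P eval s ℓ).drop (k+1) := by
    rw [List.drop_eq_getElem_cons hlen]
    congr
    have := List.getElem?_eq_getElem hlen
    rw [hb] at this
    exact Option.some_injective _ this.symm
  rw [QMid, par]
  have : ¬ (ℓ + 1 ≤ 1) := by omega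
  rw [if_neg this]
  simp only [Nat.add_sub_cancel, hdrop]

lemma insertQ_perm (eval : V → ℚ) (n : MNode V) :
    ∀ q : List (MNode V), (insertQ eval n q).Perm (n :: q) := by
  intro q
  induction q with
  | nil => simp [insertQ]
  | cons m rest ih =>
    rw [insertQ]
    by_cases h : eval n.state ≤ eval m.state
    · rw [if_pos h]
    · rw [if_neg h]
      exact (ih.cons m).trans (List.Perm.swap n m rest)

lemma insertAll_perm (eval : V → ℚ) :
    ∀ (l q : List (MNode V)), (insertAll eval l q).Perm (l ++ q) := by
  intro l
  induction l with
  | nil => intro q; simp [insertAll]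
  | cons a l ih =>
    intro q
    have h1 : insertAll eval (a :: l) q = insertAll eval l (insertQ eval a q) := rfl
    rw [h1]
    refine (ih _).trans ?_
    refine (List.Perm.append_left l (insertQ_perm eval a q)).trans ?_
    exact List.perm_middle

lemma fill_mem (P : SearchProblem V) (eval : V → ℚ) :
    ∀ (k : ℕ) (ps q : List (MNode V)) (n : MNode V),
      n ∈ fillSlots P eval k ps q → n ∈ q ∨ ∃ p ∈ ps, n ∈ children P p := by
  intro k
  induction k with
  | zero => intro ps q n h; simp [fillSlots] at h
  | succ k ih =>
    intro ps q n h
    rw [fillSlots_succ] at h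
    cases ps with
    | nil =>
      simp only at h
      cases q with
      | nil => simp at h
      | cons b rest =>
        rcases List.mem_cons.mp h with rfl | h'
        · exact Or.inl (List.mem_cons_self)
        · rcases ih [] rest n h' with h2 | h2
          · exact Or.inl (List.mem_cons_of_mem _ h2)
          · obtain ⟨p, hp, _⟩ := h2; simp at hp
    | cons p pt =>
      simp only at h
      cases hq : insertAll eval (children P p) q with
      | nil => rw [hq] at h; simp at h
      | cons b rest =>
        rw [hq] at h
        have hq1 : ∀ m, m ∈ b :: rest → m ∈ q ∨ m ∈ children P p := by
          intro m hm
          rw [← hq] at hm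
          have := (insertAll_perm eval (children P p) q).mem_iff.mp hm
          rcases List.mem_append.mp this with h2 | h2
          · exact Or.inr h2
          · exact Or.inl h2
        rcases List.mem_cons.mp h with rfl | h'
        · rcases hq1 n (List.mem_cons_self) with h2 | h2
          · exact Or.inl h2
          · exact Or.inr ⟨p, List.mem_cons_self, h2⟩
        · rcases ih pt rest n h' with h2 | h2
          · rcases hq1 n (List.mem_cons_of_mem _ h2) with h3 | h3
            · exact Or.inl h3
            · exact Or.inr ⟨p, List.mem_cons_self, h3⟩
          · obtain ⟨p', hp', hn⟩ := h2
            exact Or.inr ⟨p', List.mem_cons_of_mem _ hp', hn⟩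

/-- Well-formedness of a node: its path records its state and its g-value. -/
def WFnode (P : SearchProblem V) (n : MNode V) : Prop :=
  n.path.getLast? = some n.state ∧ n.g = pathCost P n.path

lemma pathCost_append (P : SearchProblem V) :
    ∀ (l : List V) (u c : V), l.getLast? = some u →
      pathCost P (l ++ [c]) = pathCost P l + P.cost u c := by
  intro l
  induction l with
  | nil => intro u c h; simp at h
  | cons a t ih =>
    intro u c h
    cases t with
    | nil =>
      simp at h
      subst h
      simp [pathCost]
    | cons b t' =>
      rw [List.getLast?_cons_cons] at h
      have := ih u c h
      rw [List.cons_append] at this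
      show P.cost a b + pathCost P (b :: (t' ++ [c])) =
        pathCost P (a :: b :: t') + P.cost u c
      rw [this]
      show P.cost a b + (pathCost P (b :: t') + P.cost u c) =
        P.cost a b + pathCost P (b :: t') + P.cost u c
      rw [add_assoc]

lemma children_path (P : SearchProblem V) (p n : MNode V)
    (h : n ∈ children P p) : n.path = p.path ++ [n.state] := by
  rw [children] at h
  simp only [List.mem_map] at h
  obtain ⟨c, _, rfl⟩ := h
  rfl

lemma children_WF (P : SearchProblem V) (p n : MNode V) (hp : WFnode P p)
    (h : n ∈ children P p) : WFnode P n := by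
  rw [children] at h
  simp only [List.mem_map] at h
  obtain ⟨c, _, rfl⟩ := h
  constructor
  · simp
  · show p.g + P.cost p.state c = pathCost P (p.path ++ [c])
    rw [pathCost_append P p.path p.state c hp.1, hp.2]

lemma children_nodup (P : SearchProblem V) (p : MNode V) :
    (children P p).Nodup := by
  rw [children]
  refine List.Nodup.map ?_ (Finset.nodup_toList _)
  intro a b h
  simpa using congrArg MNode.state h

lemma WF_inj (P : SearchProblem V) (m m' : MNode V) (hm : WFnode P m)
    (hm' : WFnode P m') (h : m.path = m'.path) : m = m' := by
  obtain ⟨h1, h2⟩ := hm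
  obtain ⟨h1', h2'⟩ := hm'
  cases m; cases m'
  simp only at h h1 h2 h1' h2' ⊢
  subst h
  rw [h1] at h1'
  simp only [MNode.mk.injEq]
  exact ⟨Option.some_injective _ h1', by rw [h2, h2'], trivial⟩

lemma fill_nodup (P : SearchProblem V) (eval : V → ℚ) :
    ∀ (k : ℕ) (ps q : List (MNode V)), q.Nodup →
      (∀ n ∈ q, ∀ p ∈ ps, n ∉ children P p) →
      ps.Pairwise (fun p p' => ∀ n ∈ children P p, n ∉ children P p') →
      (fillSlots P eval k ps q).Nodup := by
  intro k
  induction k with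
  | zero => intro ps q _ _ _; simp [fillSlots]
  | succ k ih =>
    intro ps q hq hdisj hpw
    rw [fillSlots_succ]
    cases ps with
    | nil =>
      simp only
      cases q with
      | nil => simp
      | cons b rest =>
        simp only [List.nodup_cons] at hq
        refine List.nodup_cons.mpr ⟨?_, ih [] rest hq.2 (by simp) (by simp)⟩
        intro hmem
        rcases fill_mem P eval k [] rest b hmem with h | h
        · exact hq.1 h
        · obtain ⟨p, hp, _⟩ := h; simp at hp
    | cons p pt =>
      simp only
      have hq1perm := insertAll_perm eval (children P p) q
      have hq1 : (insertAll eval (children P p) q).Nodup := by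
        refine hq1perm.nodup_iff.mpr ?_
        rw [List.nodup_append]
        exact ⟨children_nodup P p, hq,
          fun n hn m hm hnm => by subst hnm; exact hdisj n hm p List.mem_cons_self hn⟩
      cases hins : insertAll eval (children P p) q with
      | nil => simp
      | cons b rest =>
        rw [hins] at hq1 hq1perm
        simp only [List.nodup_cons] at hq1
        have hmemsrc : ∀ m ∈ b :: rest, m ∈ children P p ∨ m ∈ q := by
          intro m hm
          exact List.mem_append.mp (hq1perm.mem_iff.mp hm)
        have hnotin : ∀ m ∈ b :: rest, ∀ p' ∈ pt, m ∉ children P p' := by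
          intro m hm p' hp'
          rcases hmemsrc m hm with h | h
          · exact (List.pairwise_cons.mp hpw).1 p' hp' m h
          · exact hdisj m h p' (List.mem_cons_of_mem _ hp')
        refine List.nodup_cons.mpr ⟨?_, ?_⟩
        · intro hmem
          rcases fill_mem P eval k pt rest b hmem with h | h
          · exact hq1.1 h
          · obtain ⟨p', hp', hb⟩ := h
            exact hnotin b (List.mem_cons_self) p' hp' hb
        · refine ih pt rest hq1.2 ?_ (List.pairwise_cons.mp hpw).2
          intro n hn p' hp'
          exact hnotin n (List.mem_cons_of_mem _ hn) p' hp'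

/-- The beams of monobead are collections of distinct well-formed nodes whose
paths have length `depth + 1`. -/
lemma beam_inv (P : SearchProblem V) (eval : V → ℚ) (s : ℕ) :
    ∀ ℓ, (mbBeam P eval s ℓ).Nodup ∧
      ∀ n ∈ mbBeam P eval s ℓ, WFnode P n ∧ n.path.length = ℓ + 1 := by
  intro ℓ
  induction ℓ with
  | zero =>
    refine ⟨by simp [mbBeam_zero], ?_⟩
    intro n hn
    rw [mbBeam_zero] at hn
    simp only [List.mem_singleton] at hn
    subst hn
    exact ⟨⟨rfl, rfl⟩, rfl⟩
  | succ ℓ ih =>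
    obtain ⟨hnd, hwf⟩ := ih
    have hmem : ∀ n ∈ mbBeam P eval s (ℓ+1),
        ∃ p ∈ mbBeam P eval s ℓ, n ∈ children P p := by
      intro n hn
      rw [mbBeam_succ] at hn
      rcases fill_mem P eval s _ [] n hn with h | h
      · simp at h
      · exact h
    constructor
    · rw [mbBeam_succ]
      refine fill_nodup P eval s _ [] (by simp) (by simp) ?_
      refine List.Pairwise.imp_of_mem ?_ hnd
      intro p p' hp hp' hne n hn hn'
      have h1 := children_path P p n hn
      have h2 := children_path P p' n hn'
      rw [h1] at h2
      have hpath : p.path = p'.path := by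
        have := congrArg List.dropLast h2
        simpa using this
      exact hne (WF_inj P p p' (hwf p hp).1 (hwf p' hp').1 hpath)
    · intro n hn
      obtain ⟨p, hp, hc⟩ := hmem n hn
      refine ⟨children_WF P p n (hwf p hp).1 hc, ?_⟩
      rw [children_path P p n hc]
      simp [(hwf p hp).2]

/-- The expansion log of strict rectangle search after `k` iterations. -/
noncomputable def Lg (P : SearchProblem V) (eval : V → ℚ) (s : ℕ) :
    ℕ → List (MNode V)
  | 0 => [startN P]
  | k+1 => Lg P eval s k ++
      ((List.range k).flatMap fun i => (Sel P eval s (i+1) (k+1)).drop k) ++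
      Sel P eval s (k+1) (k+1)

lemma mbLog_zero (P : SearchProblem V) (eval : V → ℚ) (b : ℕ) :
    mbLog P eval b 0 = [startN P] := rfl

lemma mbLog_succ (P : SearchProblem V) (eval : V → ℚ) (b j : ℕ) :
    mbLog P eval b (j+1) = mbLog P eval b j ++ mbBeam P eval b (j+1) := rfl

lemma mbLog_eq (P : SearchProblem V) (eval : V → ℚ) (b : ℕ) :
    ∀ j, mbLog P eval b j =
      startN P :: ((List.range j).flatMap fun i => mbBeam P eval b (i+1)) := by
  intro j
  induction j with
  | zero => simp [mbLog_zero]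
  | succ j ih =>
    rw [mbLog_succ, ih, List.range_succ, List.flatMap_append]
    simp

lemma mbLog_path_len (P : SearchProblem V) (eval : V → ℚ) (s : ℕ) (j : ℕ) :
    ∀ n ∈ mbLog P eval s j, n.path.length ≤ j + 1 := by
  intro n hn
  rw [mbLog_eq] at hn
  rcases List.mem_cons.mp hn with rfl | hn
  · simp [startN]
  · rw [List.mem_flatMap] at hn
    obtain ⟨i, hi, hmem⟩ := hn
    rw [List.mem_range] at hi
    rw [((beam_inv P eval s (i+1)).2 n hmem).2]
    omega

lemma flatMap_append_perm {α β : Type*} (l : List α) (f g : α → List β) :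
    (l.flatMap fun a => f a ++ g a).Perm (l.flatMap f ++ l.flatMap g) := by
  induction l with
  | nil => simp
  | cons a t ih =>
    simp only [List.flatMap_cons, List.append_assoc]
    refine List.Perm.append_left (f a) ?_
    refine (List.Perm.append_left (g a) ih).trans ?_
    exact List.perm_append_comm_assoc _ _ _

lemma Lg_perm (P : SearchProblem V) (eval : V → ℚ) (s : ℕ) (hs : 1 ≤ s)
    (hFull : ∀ j, 1 ≤ j → j ≤ s → (mbBeam P eval s j).length = s) :
    ∀ k, k ≤ s →
      (Lg P eval s k).Perm
        (startN P :: ((List.range k).flatMap fun i => Sel P eval s (i+1) k)) := by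
  intro k
  induction k with
  | zero => intro _; simp [Lg]
  | succ k ih =>
    intro hk1
    have hk : k ≤ s := by omega
    have hsplit : ((List.range k).flatMap fun i => Sel P eval s (i+1) (k+1)) =
        (List.range k).flatMap fun i =>
          Sel P eval s (i+1) k ++ (Sel P eval s (i+1) (k+1)).drop k := by
      apply List.flatMap_congr  -- name may differ
      intro i hi
      rw [List.mem_range] at hi
      have h1 : Sel P eval s (i+1) k = (Sel P eval s (i+1) (k+1)).take k := by
        rw [Sel_take P eval s hs hFull (i+1) k (by omega) (by omega) hk,
            Sel_take P eval s hs hFull (i+1) (k+1) (by omega) (by omega) hk1,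
            List.take_take]
        congr 1
        omega
      rw [h1, List.take_append_drop]
    show (Lg P eval s k ++ _ ++ _).Perm _
    rw [List.range_succ, List.flatMap_append]
    simp only [List.flatMap_singleton]
    refine (List.Perm.append (List.Perm.append (ih hk) (List.Perm.refl _))
      (List.Perm.refl _)).trans ?_
    rw [hsplit]
    simp only [List.cons_append, List.append_assoc]
    refine List.Perm.cons _ ?_
    refine List.Perm.trans ?_
      ((List.Perm.append_right _ (flatMap_append_perm _ _ _).symm))
    rw [List.append_assoc]

/-- After `s` iterations the rectangle-search log is a permutation of the
monobead log. -/
lemma Lg_perm_mbLog (P : SearchProblem V) (eval : V → ℚ) (s : ℕ) (hs : 1 ≤ s)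
    (hFull : ∀ j, 1 ≤ j → j ≤ s → (mbBeam P eval s j).length = s) :
    (Lg P eval s s).Perm (mbLog P eval s s) := by
  refine (Lg_perm P eval s hs hFull s le_rfl).trans ?_
  rw [mbLog_eq]
  apply List.Perm.of_eq
  congr 1
  apply List.flatMap_congr
  intro i hi
  rw [List.mem_range] at hi
  exact Sel_s P eval s hs (i+1) (by omega)

lemma expand_pop (P : SearchProblem V) (eval : V → ℚ) (ℓ : ℕ) (σ : SRState V)
    (n : MNode V) (q' : List (MNode V))
    (h1 : (σ.sel ℓ).drop (σ.expCnt ℓ) = [])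
    (h2 : σ.queue ℓ = n :: q') :
    (srExpandNext P eval ℓ σ).log = σ.log ++ [n] ∧
    (srExpandNext P eval ℓ σ).iter = σ.iter ∧
    (srExpandNext P eval ℓ σ).sel ℓ = σ.sel ℓ ++ [n] ∧
    (srExpandNext P eval ℓ σ).expCnt ℓ = σ.expCnt ℓ + 1 ∧
    (srExpandNext P eval ℓ σ).queue ℓ = q' ∧
    (srExpandNext P eval ℓ σ).queue (ℓ+1) =
      insertAll eval (children P n) (σ.queue (ℓ+1)) ∧
    (∀ m, m ≠ ℓ → (srExpandNext P eval ℓ σ).sel m = σ.sel m) ∧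
    (∀ m, m ≠ ℓ → (srExpandNext P eval ℓ σ).expCnt m = σ.expCnt m) ∧
    (∀ m, m ≠ ℓ → m ≠ ℓ+1 → (srExpandNext P eval ℓ σ).queue m = σ.queue m) := by
  refine ⟨?_, ?_, ?_, ?_, ?_, ?_, fun m hm => ?_, fun m hm => ?_,
    fun m hm hm' => ?_⟩ <;>
    simp [srExpandNext, h1, h2, *]

lemma expand_sel (P : SearchProblem V) (eval : V → ℚ) (ℓ : ℕ) (σ : SRState V)
    (n : MNode V) (rest : List (MNode V))
    (h1 : (σ.sel ℓ).drop (σ.expCnt ℓ) = n :: rest) :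
    (srExpandNext P eval ℓ σ).log = σ.log ++ [n] ∧
    (srExpandNext P eval ℓ σ).iter = σ.iter ∧
    (∀ m, (srExpandNext P eval ℓ σ).sel m = σ.sel m) ∧
    (srExpandNext P eval ℓ σ).expCnt ℓ = σ.expCnt ℓ + 1 ∧
    (srExpandNext P eval ℓ σ).queue (ℓ+1) =
      insertAll eval (children P n) (σ.queue (ℓ+1)) ∧
    (∀ m, m ≠ ℓ → (srExpandNext P eval ℓ σ).expCnt m = σ.expCnt m) ∧
    (∀ m, m ≠ ℓ+1 → (srExpandNext P eval ℓ σ).queue m = σ.queue m) := by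
  refine ⟨?_, ?_, fun m => ?_, ?_, ?_, fun m hm => ?_, fun m hm => ?_⟩ <;>
    simp [srExpandNext, h1, *]

lemma select_pop (ℓ : ℕ) (σ : SRState V) (n : MNode V) (q' : List (MNode V))
    (h2 : σ.queue ℓ = n :: q') :
    (srSelect ℓ σ).log = σ.log ∧
    (srSelect ℓ σ).iter = σ.iter ∧
    (srSelect ℓ σ).sel ℓ = σ.sel ℓ ++ [n] ∧
    (srSelect ℓ σ).queue ℓ = q' ∧
    (∀ m, (srSelect ℓ σ).expCnt m = σ.expCnt m) ∧
    (∀ m, m ≠ ℓ → (srSelect ℓ σ).sel m = σ.sel m) ∧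
    (∀ m, m ≠ ℓ → (srSelect ℓ σ).queue m = σ.queue m) := by
  refine ⟨?_, ?_, ?_, ?_, fun m => ?_, fun m hm => ?_, fun m hm => ?_⟩ <;>
    simp [srSelect, h2, *]

lemma select_any (ℓ : ℕ) (σ : SRState V) :
    (srSelect ℓ σ).log = σ.log ∧
    (srSelect ℓ σ).iter = σ.iter ∧
    (∀ m, (srSelect ℓ σ).expCnt m = σ.expCnt m) ∧
    (∀ m, m ≠ ℓ → (srSelect ℓ σ).sel m = σ.sel m) ∧
    (∀ m, m ≠ ℓ → (srSelect ℓ σ).queue m = σ.queue m) := by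
  cases h : σ.queue ℓ with
  | nil =>
    refine ⟨?_, ?_, fun m => ?_, fun m hm => ?_, fun m hm => ?_⟩ <;>
      simp [srSelect, h, *]
  | cons n q' =>
    obtain ⟨a, b, _, _, c, d, e⟩ := select_pop ℓ σ n q' h
    exact ⟨a, b, c, d, e⟩

lemma Sel_zero (P : SearchProblem V) (eval : V → ℚ) (s ℓ : ℕ) :
    Sel P eval s ℓ 0 = [] := rfl

lemma Que_zero (P : SearchProblem V) (eval : V → ℚ) (s ℓ : ℕ) :
    Que P eval s ℓ 0 = q0 P eval ℓ := rfl

lemma beam_get (P : SearchProblem V) (eval : V → ℚ) (s : ℕ)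
    (hFull : ∀ j, 1 ≤ j → j ≤ s → (mbBeam P eval s j).length = s)
    (ℓ j : ℕ) (hl : 1 ≤ ℓ) (hls : ℓ ≤ s) (hj : j < s) :
    ∃ b, (mbBeam P eval s ℓ)[j]? = some b := by
  have : j < (mbBeam P eval s ℓ).length := by rw [hFull ℓ hl hls]; omega
  exact ⟨_, List.getElem?_eq_getElem this⟩

lemma Sel_getElem (P : SearchProblem V) (eval : V → ℚ) (s : ℕ) (hs : 1 ≤ s)
    (hFull : ∀ j, 1 ≤ j → j ≤ s → (mbBeam P eval s j).length = s)
    (ℓ j k : ℕ) (hl : 1 ≤ ℓ) (hls : ℓ ≤ s) (hj : j < k) (hk : k ≤ s)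
    (b : MNode V) (hb : (mbBeam P eval s ℓ)[j]? = some b) :
    (Sel P eval s ℓ k)[j]? = some b := by
  rw [Sel_take P eval s hs hFull ℓ k hl hls hk, List.getElem?_take]
  rw [if_pos hj]
  exact hb

lemma Sel_drop_cons (P : SearchProblem V) (eval : V → ℚ) (s : ℕ) (hs : 1 ≤ s)
    (hFull : ∀ j, 1 ≤ j → j ≤ s → (mbBeam P eval s j).length = s)
    (ℓ j k : ℕ) (hl : 1 ≤ ℓ) (hls : ℓ ≤ s) (hj : j < k) (hk : k ≤ s)
    (b : MNode V) (hb : (mbBeam P eval s ℓ)[j]? = some b) :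
    (Sel P eval s ℓ k).drop j = b :: (Sel P eval s ℓ k).drop (j+1) := by
  have hlen : j < (Sel P eval s ℓ k).length := by
    rw [Sel_len P eval s hs hFull ℓ k hl hls hk]; omega
  rw [List.drop_eq_getElem_cons hlen]
  congr 1
  have h1 := List.getElem?_eq_getElem hlen
  rw [Sel_getElem P eval s hs hFull ℓ j k hl hls hj hk b hb] at h1
  exact (Option.some_injective _ h1.symm)

/-- Take `j+1` elements of `Sel ℓ m` once the `j`-th beam entry is known. -/
lemma Sel_take_succ (P : SearchProblem V) (eval : V → ℚ) (s : ℕ) (hs : 1 ≤ s)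
    (hFull : ∀ j, 1 ≤ j → j ≤ s → (mbBeam P eval s j).length = s)
    (ℓ j m : ℕ) (hl : 1 ≤ ℓ) (hls : ℓ ≤ s) (hj : j < m) (hm : m ≤ s)
    (b : MNode V) (hb : (mbBeam P eval s ℓ)[j]? = some b) :
    (Sel P eval s ℓ m).take (j+1) = (Sel P eval s ℓ m).take j ++ [b] := by
  rw [List.take_succ, Sel_getElem P eval s hs hFull ℓ j m hl hls hj hm b hb]
  rfl

/-- The simulation invariant: the state of strict rectangle search after `k`
iterations (`k ≤ s`). -/
def Inv (P : SearchProblem V) (eval : V → ℚ) (s k : ℕ) (σ : SRState V) : Prop :=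
  σ.iter = k ∧ σ.log = Lg P eval s k ∧
  (∀ ℓ, 1 ≤ ℓ → ℓ ≤ k →
    σ.sel ℓ = Sel P eval s ℓ k ∧ σ.expCnt ℓ = k ∧ σ.queue ℓ = Que P eval s ℓ k) ∧
  (k+1 ≤ s →
    σ.sel (k+1) = Sel P eval s (k+1) k ∧ σ.expCnt (k+1) = 0 ∧
    σ.queue (k+1) = Que P eval s (k+1) k) ∧
  (∀ ℓ, k+2 ≤ ℓ → ℓ ≤ s → σ.sel ℓ = [] ∧ σ.expCnt ℓ = 0 ∧ σ.queue ℓ = [])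

lemma Inv_init (P : SearchProblem V) (eval : V → ℚ) (s : ℕ) (hs : 1 ≤ s) :
    Inv P eval s 0 (srInit P eval) := by
  set σ0 : SRState V :=
    { sel := fun m => if m = 0 then [⟨P.start, 0, [P.start]⟩] else [],
      expCnt := fun _ => 0, queue := fun _ => [],
      log := [], iter := 0, starved := false } with hσ0
  have h1 : (σ0.sel 0).drop (σ0.expCnt 0) = startN P :: [] := by
    simp [hσ0, startN]
  obtain ⟨hlog, hiter, hsel, hexp, hqueue, hexp', hqueue'⟩ :=
    expand_sel P eval 0 σ0 (startN P) [] h1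
  have hres : srInit P eval = srExpandNext P eval 0 σ0 := rfl
  refine ⟨?_, ?_, ?_, ?_, ?_⟩
  · rw [hres, hiter]
  · rw [hres, hlog]; rfl
  · intro ℓ h1 h2; omega
  · intro _
    refine ⟨?_, ?_, ?_⟩
    · rw [hres, hsel 1, Sel_zero]; simp [hσ0]
    · rw [hres, hexp' 1 (by omega)]
    · rw [hres, hqueue, Que_zero, q0]
      simp [hσ0]
  · intro ℓ hl2 hls
    refine ⟨?_, ?_, ?_⟩
    · rw [hres, hsel ℓ]; simp only [hσ0]; rw [if_neg (by omega)]
    · rw [hres, hexp' ℓ (by omega)]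
    · rw [hres, hqueue' ℓ (by omega)]

/-- Mid-iteration invariant for the shallow phase of iteration `k+1`. -/
def Jinv (P : SearchProblem V) (eval : V → ℚ) (s k j : ℕ) (τ : SRState V) :
    Prop :=
  τ.iter = k ∧
  τ.log = Lg P eval s k ++
    ((List.range j).flatMap fun i => (Sel P eval s (i+1) (k+1)).drop k) ∧
  (∀ ℓ, 1 ≤ ℓ → ℓ ≤ j → τ.sel ℓ = Sel P eval s ℓ (k+1) ∧
      τ.expCnt ℓ = k+1 ∧ τ.queue ℓ = Que P eval s ℓ (k+1)) ∧
  (∀ ℓ, j+1 ≤ ℓ → ℓ ≤ k → τ.sel ℓ = Sel P eval s ℓ k ∧ τ.expCnt ℓ = k ∧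
      τ.queue ℓ = if ℓ = j+1 then QMid P eval s ℓ k else Que P eval s ℓ k) ∧
  (τ.sel (k+1) = Sel P eval s (k+1) k ∧ τ.expCnt (k+1) = 0 ∧
      τ.queue (k+1) =
        if j = k then QMid P eval s (k+1) k else Que P eval s (k+1) k) ∧
  (∀ ℓ, k+2 ≤ ℓ → ℓ ≤ s → τ.sel ℓ = [] ∧ τ.expCnt ℓ = 0 ∧ τ.queue ℓ = [])

lemma phase1 (P : SearchProblem V) (eval : V → ℚ) (s : ℕ) (hs : 1 ≤ s)
    (hFull : ∀ j, 1 ≤ j → j ≤ s → (mbBeam P eval s j).length = s)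
    (k : ℕ) (hk1 : k + 1 ≤ s) (σ : SRState V) (hI : Inv P eval s k σ) :
    ∀ j, j ≤ k → Jinv P eval s k j
      ((List.range j).foldl (fun σ' i => srExpandNext P eval (i + 1) σ') σ) := by
  obtain ⟨hiter, hlog, hmid, htop, hzero⟩ := hI
  intro j
  induction j with
  | zero =>
    intro _
    simp only [List.range_zero, List.foldl_nil]
    refine ⟨hiter, by simp [hlog], by omega, ?_, ?_, hzero⟩
    · intro ℓ h1 h2
      obtain ⟨a, b, c⟩ := hmid ℓ (by omega) h2
      refine ⟨a, b, ?_⟩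
      rcases eq_or_ne ℓ 1 with rfl | hne
      · rw [if_pos rfl, QMid_one]; exact c
      · rw [if_neg hne]; exact c
    · obtain ⟨a, b, c⟩ := htop hk1
      refine ⟨a, b, ?_⟩
      rcases eq_or_ne (0:ℕ) k with rfl | hne
      · rw [if_pos rfl, QMid_one]; exact c
      · rw [if_neg hne]; exact c
  | succ j ihj =>
    intro hjk
    have hj : j ≤ k := by omega
    obtain ⟨jiter, jlog, jdone, jpend, jtop, jzero⟩ := ihj hj
    set τ := (List.range j).foldl (fun σ' i => srExpandNext P eval (i + 1) σ') σ
      with hτ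
    have hfold : (List.range (j+1)).foldl
        (fun σ' i => srExpandNext P eval (i + 1) σ') σ =
        srExpandNext P eval (j + 1) τ := by
      rw [List.range_succ, List.foldl_append, List.foldl_cons, List.foldl_nil]
    rw [hfold]
    obtain ⟨hsel, hexp, hq⟩ := jpend (j+1) le_rfl (by omega)
    rw [if_pos rfl] at hq
    have hlenSel : (Sel P eval s (j+1) k).length = k :=
      Sel_len P eval s hs hFull (j+1) k (by omega) (by omega) (by omega)
    have h1 : (τ.sel (j+1)).drop (τ.expCnt (j+1)) = [] := by
      rw [hsel, hexp]
      exact List.drop_eq_nil_of_le (le_of_eq hlenSel)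
    obtain ⟨b, hb, hQM, hSel⟩ := level_step P eval s hs hFull (j+1) k
      (by omega) (by omega) hk1
    have h2 : τ.queue (j+1) = b :: Que P eval s (j+1) (k+1) := by
      rw [hq, hQM]
    obtain ⟨elog, eiter, esel, eexp, equeue, equeue1, eselO, eexpO, equeueO⟩ :=
      expand_pop P eval (j+1) τ b (Que P eval s (j+1) (k+1)) h1 h2
    have hdropb : (Sel P eval s (j+1) (k+1)).drop k = [b] := by
      rw [hSel, List.drop_left' hlenSel]
    refine ⟨by rw [eiter, jiter], ?_, ?_, ?_, ?_, ?_⟩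
    · rw [elog, jlog, List.range_succ, List.flatMap_append]
      simp [hdropb]
    · intro ℓ hl1 hl2
      rcases eq_or_ne ℓ (j+1) with rfl | hne
      · exact ⟨by rw [esel, hsel, hSel], by rw [eexp, hexp], by rw [equeue]⟩
      · obtain ⟨a, b', c⟩ := jdone ℓ hl1 (by omega)
        exact ⟨by rw [eselO ℓ hne, a], by rw [eexpO ℓ hne, b'],
          by rw [equeueO ℓ hne (by omega), c]⟩
    · intro ℓ hl1 hl2
      have hne : ℓ ≠ j+1 := by omega
      obtain ⟨a, b', c⟩ := jpend ℓ (by omega) hl2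
      rw [if_neg hne] at c
      refine ⟨by rw [eselO ℓ hne, a], by rw [eexpO ℓ hne, b'], ?_⟩
      rcases eq_or_ne ℓ (j+2) with rfl | hne2
      · rw [if_pos rfl, equeue1, c, QMid_up P eval s (j+1) k (by omega) b hb]
      · rw [if_neg hne2, equeueO ℓ hne hne2, c]
    · have hne : k+1 ≠ j+1 := by omega
      obtain ⟨a, b', c⟩ := jtop
      rw [if_neg (by omega : j ≠ k)] at c
      refine ⟨by rw [eselO _ hne, a], by rw [eexpO _ hne, b'], ?_⟩
      rcases eq_or_ne (j+1) k with hjk1 | hne2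
      · have hk12 : k+1 = j+2 := by omega
        have c2 := c
        rw [hk12] at c2
        rw [if_pos hjk1, hk12, equeue1, c2]
        exact (QMid_up P eval s (j+1) k (by omega) b hb).symm
      · rw [if_neg hne2, equeueO _ hne (by omega), c]
    · intro ℓ hl1 hl2
      obtain ⟨a, b', c⟩ := jzero ℓ hl1 hl2
      exact ⟨by rw [eselO ℓ (by omega), a], by rw [eexpO ℓ (by omega), b'],
        by rw [equeueO ℓ (by omega) (by omega), c]⟩

/-- Mid-iteration invariant for the deep phase of iteration `k+1`. -/
def Kinv (P : SearchProblem V) (eval : V → ℚ) (s k j : ℕ) (τ : SRState V) :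
    Prop :=
  τ.iter = k ∧
  τ.log = Lg P eval s k ++
    ((List.range k).flatMap fun i => (Sel P eval s (i+1) (k+1)).drop k) ++
    (Sel P eval s (k+1) (k+1)).take j ∧
  (∀ ℓ, 1 ≤ ℓ → ℓ ≤ k → τ.sel ℓ = Sel P eval s ℓ (k+1) ∧
      τ.expCnt ℓ = k+1 ∧ τ.queue ℓ = Que P eval s ℓ (k+1)) ∧
  (τ.sel (k+1) =
      (if j = k+1 then Sel P eval s (k+1) (k+1) else Sel P eval s (k+1) k) ∧
    τ.expCnt (k+1) = j ∧
    τ.queue (k+1) =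
      (if j = k+1 then Que P eval s (k+1) (k+1) else QMid P eval s (k+1) k)) ∧
  (k+2 ≤ s → τ.sel (k+2) = Sel P eval s (k+2) j ∧ τ.expCnt (k+2) = 0 ∧
      τ.queue (k+2) = Que P eval s (k+2) j) ∧
  (∀ ℓ, k+3 ≤ ℓ → ℓ ≤ s → τ.sel ℓ = [] ∧ τ.expCnt ℓ = 0 ∧ τ.queue ℓ = [])

lemma phase2 (P : SearchProblem V) (eval : V → ℚ) (s : ℕ) (hs : 1 ≤ s)
    (hFull : ∀ j, 1 ≤ j → j ≤ s → (mbBeam P eval s j).length = s)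
    (k : ℕ) (hk1 : k + 1 ≤ s) (σ1 : SRState V) (hJ : Jinv P eval s k k σ1) :
    ∀ j, j ≤ k+1 → Kinv P eval s k j
      ((List.range j).foldl
        (fun σ' _ => srSelect (k+2) (srExpandNext P eval (k+1) σ')) σ1) := by
  obtain ⟨jiter, jlog, jdone, _, jtop, jzero⟩ := hJ
  intro j
  induction j with
  | zero =>
    intro _
    simp only [List.range_zero, List.foldl_nil]
    refine ⟨jiter, by simp [jlog], jdone, ?_, ?_, ?_⟩
    · obtain ⟨a, b, c⟩ := jtop
      rw [if_pos rfl] at c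
      exact ⟨by rw [a, if_neg (by omega)], b, by rw [c, if_neg (by omega)]⟩
    · intro h
      obtain ⟨a, b, c⟩ := jzero (k+2) le_rfl h
      refine ⟨by rw [a, Sel_zero], b, ?_⟩
      rw [c, Que_zero, q0, if_neg (by omega)]
    · intro ℓ h1 h2
      exact jzero ℓ (by omega) h2
  | succ j ihj =>
    intro hjk
    have hj : j ≤ k := by omega
    obtain ⟨kiter, klog, kdone, ktop, knext, kzero⟩ := ihj (by omega)
    set τ := (List.range j).foldl
        (fun σ' _ => srSelect (k+2) (srExpandNext P eval (k+1) σ')) σ1 with hτ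
    have hfold : (List.range (j+1)).foldl
        (fun σ' _ => srSelect (k+2) (srExpandNext P eval (k+1) σ')) σ1 =
        srSelect (k+2) (srExpandNext P eval (k+1) τ) := by
      rw [List.range_succ, List.foldl_append, List.foldl_cons, List.foldl_nil]
    rw [hfold]
    obtain ⟨ksel, kexp, kqueue⟩ := ktop
    rw [if_neg (by omega : j ≠ k+1)] at ksel kqueue
    obtain ⟨n, hn⟩ := beam_get P eval s hFull (k+1) j (by omega) hk1 (by omega)
    -- the expansion at level k+1
    have hexpand : (srExpandNext P eval (k+1) τ).log = τ.log ++ [n] ∧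
        (srExpandNext P eval (k+1) τ).iter = τ.iter ∧
        (srExpandNext P eval (k+1) τ).sel (k+1) =
          (if j = k then Sel P eval s (k+1) (k+1) else Sel P eval s (k+1) k) ∧
        (srExpandNext P eval (k+1) τ).expCnt (k+1) = j + 1 ∧
        (srExpandNext P eval (k+1) τ).queue (k+1) =
          (if j = k then Que P eval s (k+1) (k+1) else QMid P eval s (k+1) k) ∧
        (srExpandNext P eval (k+1) τ).queue (k+2) =
          insertAll eval (children P n) (τ.queue (k+2)) ∧
        (∀ m, m ≠ k+1 → (srExpandNext P eval (k+1) τ).sel m = τ.sel m) ∧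
        (∀ m, m ≠ k+1 → (srExpandNext P eval (k+1) τ).expCnt m = τ.expCnt m) ∧
        (∀ m, m ≠ k+1 → m ≠ k+2 →
          (srExpandNext P eval (k+1) τ).queue m = τ.queue m) := by
      rcases eq_or_ne j k with rfl | hjne
      · -- pop step (k has been substituted by j)
        have h1 : (τ.sel (j+1)).drop (τ.expCnt (j+1)) = [] := by
          rw [ksel, kexp]
          exact List.drop_eq_nil_of_le
            (le_of_eq (Sel_len P eval s hs hFull (j+1) j (by omega) (by omega)
              (by omega)))
        obtain ⟨b, hb, hQM, hSel⟩ := level_step P eval s hs hFull (j+1) j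
          (by omega) (by omega) hk1
        have hbn : b = n := by
          rw [hn] at hb; exact (Option.some_injective _ hb).symm
        subst hbn
        have h2 : τ.queue (j+1) = b :: Que P eval s (j+1) (j+1) := by
          rw [kqueue, hQM]
        obtain ⟨elog, eiter, esel, eexp, equeue, equeue1, eselO, eexpO, equeueO⟩ :=
          expand_pop P eval (j+1) τ b (Que P eval s (j+1) (j+1)) h1 h2
        refine ⟨elog, eiter, ?_, by rw [eexp, kexp], ?_,
          by exact equeue1, eselO, eexpO, by exact equeueO⟩
        · rw [if_pos rfl, esel, ksel, hSel]
        · rw [if_pos rfl, equeue]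
      · -- expansion of an already selected node
        have h1 : (τ.sel (k+1)).drop (τ.expCnt (k+1)) =
            n :: (Sel P eval s (k+1) k).drop (j+1) := by
          rw [ksel, kexp]
          exact Sel_drop_cons P eval s hs hFull (k+1) j k (by omega) hk1
            (by omega) (by omega) n hn
        obtain ⟨elog, eiter, esel, eexp, equeue1, eexpO, equeueO⟩ :=
          expand_sel P eval (k+1) τ n _ h1
        refine ⟨elog, eiter, ?_, by rw [eexp, kexp], ?_,
          by exact equeue1, fun m _ => esel m, eexpO, fun m _ hm2 => equeueO m hm2⟩
        · rw [if_neg hjne, esel, ksel]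
        · rw [if_neg hjne, equeueO (k+1) (by omega), kqueue]
    obtain ⟨elog, eiter, eseltop, eexptop, equeuetop, equeue2, eselO, eexpO,
      equeueO⟩ := hexpand
    set τ' := srExpandNext P eval (k+1) τ with hτ'
    -- the selection at level k+2
    have hselect : ((srSelect (k+2) τ').log = τ'.log ∧
        (srSelect (k+2) τ').iter = τ'.iter ∧
        (∀ m, (srSelect (k+2) τ').expCnt m = τ'.expCnt m) ∧
        (∀ m, m ≠ k+2 → (srSelect (k+2) τ').sel m = τ'.sel m) ∧
        (∀ m, m ≠ k+2 → (srSelect (k+2) τ').queue m = τ'.queue m)) ∧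
        (k+2 ≤ s → (srSelect (k+2) τ').sel (k+2) = Sel P eval s (k+2) (j+1) ∧
          (srSelect (k+2) τ').queue (k+2) = Que P eval s (k+2) (j+1)) := by
      constructor
      · exact select_any (k+2) τ'
      · intro hk2
        obtain ⟨nsel, nexp, nqueue⟩ := knext hk2
        obtain ⟨c, hc, hQM2, hSel2⟩ := level_step P eval s hs hFull (k+2) j
          (by omega) hk2 (by omega)
        have hq2 : τ'.queue (k+2) = c :: Que P eval s (k+2) (j+1) := by
          rw [equeue2, nqueue, ← QMid_up P eval s (k+1) j (by omega) n hn, hQM2]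
        obtain ⟨_, _, ssel, squeue, _, _, _⟩ :=
          select_pop (k+2) τ' c (Que P eval s (k+2) (j+1)) hq2
        refine ⟨?_, by rw [squeue]⟩
        rw [ssel, eselO (k+2) (by omega), nsel, hSel2]
    obtain ⟨⟨slog, siter, sexp, sselO, squeueO⟩, stracked⟩ := hselect
    refine ⟨by rw [siter, eiter, kiter], ?_, ?_, ?_, ?_, ?_⟩
    · rw [slog, elog, klog]
      have : (Sel P eval s (k+1) (k+1)).take (j+1) =
          (Sel P eval s (k+1) (k+1)).take j ++ [n] :=
        Sel_take_succ P eval s hs hFull (k+1) j (k+1) (by omega) hk1 (by omega)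
          hk1 n hn
      rw [this, ← List.append_assoc]
    · intro ℓ h1 h2
      obtain ⟨a, b, c⟩ := kdone ℓ h1 h2
      exact ⟨by rw [sselO ℓ (by omega), eselO ℓ (by omega), a],
        by rw [sexp ℓ, eexpO ℓ (by omega), b],
        by rw [squeueO ℓ (by omega), equeueO ℓ (by omega) (by omega), c]⟩
    · refine ⟨?_, ?_, ?_⟩
      · rw [sselO (k+1) (by omega), eseltop]
        rcases eq_or_ne j k with rfl | hne
        · rw [if_pos rfl, if_pos rfl]
        · rw [if_neg hne, if_neg (by omega)]
      · rw [sexp (k+1), eexptop]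
      · rw [squeueO (k+1) (by omega), equeuetop]
        rcases eq_or_ne j k with rfl | hne
        · rw [if_pos rfl, if_pos rfl]
        · rw [if_neg hne, if_neg (by omega)]
    · intro hk2
      obtain ⟨a, b⟩ := stracked hk2
      refine ⟨a, ?_, b⟩
      rw [sexp (k+2), eexpO (k+2) (by omega)]
      exact (knext hk2).2.1
    · intro ℓ h1 h2
      obtain ⟨a, b, c⟩ := kzero ℓ h1 h2
      exact ⟨by rw [sselO ℓ (by omega), eselO ℓ (by omega), a],
        by rw [sexp ℓ, eexpO ℓ (by omega), b],
        by rw [squeueO ℓ (by omega), equeueO ℓ (by omega) (by omega), c]⟩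

lemma Lg_succ (P : SearchProblem V) (eval : V → ℚ) (s k : ℕ) :
    Lg P eval s (k+1) = Lg P eval s k ++
      ((List.range k).flatMap fun i => (Sel P eval s (i+1) (k+1)).drop k) ++
      Sel P eval s (k+1) (k+1) := rfl

lemma Inv_step (P : SearchProblem V) (eval : V → ℚ) (s : ℕ) (hs : 1 ≤ s)
    (hFull : ∀ j, 1 ≤ j → j ≤ s → (mbBeam P eval s j).length = s)
    (k : ℕ) (hk1 : k + 1 ≤ s) (σ : SRState V) (hI : Inv P eval s k σ) :
    Inv P eval s (k+1) (srIter P eval σ) := by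
  have hiter := hI.1
  set τ2 := (List.range (k+1)).foldl
      (fun σ' _ => srSelect (k+2) (srExpandNext P eval (k+1) σ'))
      ((List.range k).foldl (fun σ' i => srExpandNext P eval (i+1) σ') σ)
    with hτ2
  have hsr : srIter P eval σ = { τ2 with iter := k+1 } := by
    simp only [srIter, hiter, Nat.add_sub_cancel, hτ2]
  have hJ := phase1 P eval s hs hFull k hk1 σ hI k le_rfl
  have hK := phase2 P eval s hs hFull k hk1 _ hJ (k+1) le_rfl
  rw [← hτ2] at hK
  obtain ⟨kiter, klog, kdone, ktop, knext, kzero⟩ := hK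
  rw [hsr]
  refine ⟨rfl, ?_, ?_, ?_, ?_⟩
  · show τ2.log = Lg P eval s (k+1)
    rw [Lg_succ, klog]
    congr 1
    refine List.take_of_length_le (le_of_eq ?_)
    exact Sel_len P eval s hs hFull (k+1) (k+1) (by omega) hk1 hk1
  · intro ℓ h1 h2
    rcases eq_or_ne ℓ (k+1) with rfl | hne
    · obtain ⟨a, b, c⟩ := ktop
      rw [if_pos rfl] at a c
      exact ⟨a, b, c⟩
    · exact kdone ℓ h1 (by omega)
  · intro h
    exact knext h
  · intro ℓ h1 h2
    exact kzero ℓ (by omega) h2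

lemma Inv_run (P : SearchProblem V) (eval : V → ℚ) (s : ℕ) (hs : 1 ≤ s)
    (hFull : ∀ j, 1 ≤ j → j ≤ s → (mbBeam P eval s j).length = s) :
    ∀ k, k ≤ s → Inv P eval s k (srRun P eval k) := by
  intro k
  induction k with
  | zero => intro _; exact Inv_init P eval s hs
  | succ k ih =>
    intro hk
    have : srRun P eval (k+1) = srIter P eval (srRun P eval k) := by
      rw [srRun, srRun, Function.iterate_succ_apply']
    rw [this]
    exact Inv_step P eval s hs hFull k hk _ (ih (by omega))

lemma takeWhile_of_last [DecidableEq V] (l : List (MNode V)) (x : MNode V)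
    (hlast : l.getLast? = some x) (hcount : l.count x = 1) :
    l.takeWhile (fun n => n != x) = l.dropLast := by
  have hl : l.dropLast ++ [x] = l := List.dropLast_append_getLast? x hlast
  have hnot : x ∉ l.dropLast := by
    intro hmem
    have h1 : 1 ≤ l.dropLast.count x := List.count_pos_iff.mpr hmem
    rw [← hl, List.count_append] at hcount
    simp [List.count_singleton] at hcount
    omega
  have hall : l.dropLast.takeWhile (fun n => n != x) = l.dropLast := by
    rw [List.takeWhile_eq_self_iff]
    intro a ha
    simp only [bne_iff_ne, ne_eq]
    intro h; exact hnot (h ▸ ha)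
  conv_lhs => rw [← hl]
  rw [List.takeWhile_append, hall, if_pos rfl]
  simp

/-- `x` is the last entry of the monobead log and occurs in it exactly once. -/
lemma mblog_last (P : SearchProblem V) (eval : V → ℚ) [DecidableEq V]
    (s : ℕ) (hs : 1 ≤ s)
    (hFull : ∀ j, 1 ≤ j → j ≤ s → (mbBeam P eval s j).length = s)
    (x : MNode V) (hx : (mbBeam P eval s s)[s - 1]? = some x) :
    (mbLog P eval s s).getLast? = some x ∧ (mbLog P eval s s).count x = 1 := by
  have hxmem : x ∈ mbBeam P eval s s := List.mem_of_getElem? hx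
  have hlastBeam : (mbBeam P eval s s).getLast? = some x := by
    rw [List.getLast?_eq_getElem?, hFull s hs le_rfl, hx]
  obtain ⟨s', rfl⟩ : ∃ s', s = s' + 1 := ⟨s - 1, by omega⟩
  rw [mbLog_succ]
  constructor
  · rw [List.getLast?_append, hlastBeam]
    rfl
  · rw [List.count_append]
    have hxlen : x.path.length = (s'+1) + 1 :=
      ((beam_inv P eval (s'+1) (s'+1)).2 x hxmem).2
    have h0 : (mbLog P eval (s'+1) s').count x = 0 := by
      rw [List.count_eq_zero]
      intro hmem
      have := mbLog_path_len P eval (s'+1) s' x hmem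
      omega
    rw [h0, List.count_eq_one_of_mem (beam_inv P eval (s'+1) (s'+1)).1 hxmem]

/-- `x` is the last entry of the rectangle-search log. -/
lemma srlog_last (P : SearchProblem V) (eval : V → ℚ) (s : ℕ) (hs : 1 ≤ s)
    (hFull : ∀ j, 1 ≤ j → j ≤ s → (mbBeam P eval s j).length = s)
    (x : MNode V) (hx : (mbBeam P eval s s)[s - 1]? = some x) :
    (Lg P eval s s).getLast? = some x := by
  have hlastBeam : (mbBeam P eval s s).getLast? = some x := by
    rw [List.getLast?_eq_getElem?, hFull s hs le_rfl, hx]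
  obtain ⟨s', rfl⟩ : ∃ s', s = s' + 1 := ⟨s - 1, by omega⟩
  rw [Lg_succ, List.getLast?_append]
  rw [Sel_s P eval (s'+1) hs (s'+1) hs, hlastBeam]
  rfl


/-- When `s = d`, strict rectangle search searches exactly
the same region as monobead: suppose monobead with beam width `s` generates
its first solution when expanding a node `x` at slot `s` of depth `d`, that
no other solutions exist, that strict rectangle search never runs out of
nodes to fill its beam, and that tie-breaking is identical (both models use
the same deterministic queue insertion).  If `s = d`, then strict rectangle
search expands `x`, it expands exactly the same set of nodes as monobead up
to the expansion of `x`, and in particular the numbers of nodes expanded by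
the two algorithms up to the expansion of `x` are equal (the overhead is
0). -/
theorem strict_rectangle_overhead_eq_zero
    (V : Type) [DecidableEq V]
    (P : SearchProblem V) (eval : V → ℚ)
    (s d : ℕ) (hs : 1 ≤ s) (hd : 1 ≤ d) (x : MNode V)
    -- monobead with beam width `s` expands `x` in slot `s` at depth `d` ...
    (hx : (mbBeam P eval s d)[s - 1]? = some x)
    -- ... and that expansion generates a solution (a goal child of `x`) ...
    (hsol : ∃ c ∈ P.succ x.state, P.isGoal c = true)
    -- ... which is monobead's first solution: no node expanded before `x`
    -- generates a goal ...
    (hfirst : ∀ n ∈ (mbLog P eval s d).takeWhile (fun m => m != x),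
        ∀ c ∈ P.succ n.state, P.isGoal c = false)
    -- ... and no other solutions exist: every solution path is obtained by
    -- extending `x`'s path with a goal child of `x`
    (honly : ∀ p, IsSolutionPath P p →
        ∃ c ∈ P.succ x.state, P.isGoal c = true ∧ p = x.path ++ [c])
    -- monobead never runs out of nodes to fill its beam ...
    (hmbFull : ∀ j, 1 ≤ j → j ≤ d → (mbBeam P eval s j).length = s)
    -- ... and neither does strict rectangle search
    (hsrOK : (srRun P eval (max s d)).starved = false)
    (hcase : s = d) :
    x ∈ (srRun P eval (max s d)).log ∧
    ((srRun P eval (max s d)).log.takeWhile (fun m => m != x) ++ [x]).toFinset =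
      ((mbLog P eval s d).takeWhile (fun m => m != x) ++ [x]).toFinset ∧
    countUpTo (srRun P eval (max s d)).log x = countUpTo (mbLog P eval s d) x := by
  subst hcase
  simp only [Nat.max_self] at *
  have hFull : ∀ j, 1 ≤ j → j ≤ s → (mbBeam P eval s j).length = s := hmbFull
  have hlog : (srRun P eval s).log = Lg P eval s s :=
    (Inv_run P eval s hs hFull s le_rfl).2.1
  have hperm : (srRun P eval s).log.Perm (mbLog P eval s s) := by
    rw [hlog]; exact Lg_perm_mbLog P eval s hs hFull
  obtain ⟨hlast2, hcount2⟩ := mblog_last P eval s hs hFull x hx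
  have hlast1 : (srRun P eval s).log.getLast? = some x := by
    rw [hlog]; exact srlog_last P eval s hs hFull x hx
  have hcount1 : (srRun P eval s).log.count x = 1 := by
    rw [hperm.count_eq x]; exact hcount2
  have htw1 := takeWhile_of_last (srRun P eval s).log x hlast1 hcount1
  have htw2 := takeWhile_of_last (mbLog P eval s s) x hlast2 hcount2
  refine ⟨?_, ?_, ?_⟩
  · exact List.count_pos_iff.mp (by rw [hcount1]; omega)
  · rw [htw1, htw2, List.dropLast_append_getLast? x hlast1,
      List.dropLast_append_getLast? x hlast2]
    ext a
    simp only [List.mem_toFinset]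
    exact hperm.mem_iff
  · rw [countUpTo, countUpTo, htw1, htw2, List.length_dropLast,
      List.length_dropLast, hperm.length_eq]


end RectangleSearchFormal
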